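/- Let Γ be a finite connected chordal graph. Then the flag complex (clique complex) of Γ is acyclic, i.e., all reduced simplicial homology groups of the clique complex of Γ vanish (over any coefficient ring). -/

import Mathlib

open SimpleGraph Finset

variable {V : Type} [Fintype V] [LinearOrder V]

/-- The `k`-simplices of the flag (clique) complex of `G`: cliques with `k+1` vertices. -/
def FlagSimplex (G : SimpleGraph V) (k : ℕ) : Type :=
  {s : Finset V // s.card = k + 1 ∧ G.IsClique s}

/-- The simplicial `k`-chains of the flag complex with coefficients in `R`. -/
def FlagChain (G : SimpleGraph V) (R : Type*) [CommRing R] (k : ℕ) : Type _ :=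
  FlagSimplex G k →₀ R

noncomputable instance (G : SimpleGraph V) (R : Type*) [CommRing R] (k : ℕ) :
    AddCommGroup (FlagChain G R k) := Finsupp.instAddCommGroup

noncomputable instance (G : SimpleGraph V) (R : Type*) [CommRing R] (k : ℕ) :
    Module R (FlagChain G R k) := Finsupp.module _ _

/-- The simplicial boundary map of the flag complex (with the orientation coming
from the linear order on the vertices). -/
noncomputable def flagBdry (G : SimpleGraph V) (R : Type) [CommRing R] (k : ℕ) :
    FlagChain G R (k + 1) →ₗ[R] FlagChain G R k :=
  Finsupp.lsum R fun s =>
    (LinearMap.toSpanSingleton R _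
      (∑ v ∈ s.1.attach,
        ((-1 : R) ^ (s.1.filter (· < v.1)).card) •
          Finsupp.single (⟨s.1.erase v.1,
            by
              constructor
              · rw [Finset.card_erase_of_mem v.2, s.2.1]; rfl
              · exact s.2.2.subset (Finset.erase_subset _ _)⟩ : FlagSimplex G k) (1 : R)))

/-- The augmentation map: the sum of the coefficients of a `0`-chain. -/
noncomputable def flagAug (G : SimpleGraph V) (R : Type) [CommRing R] :
    FlagChain G R 0 →ₗ[R] R :=
  Finsupp.lsum R fun _ => LinearMap.id

/-- The flag complex of `G` is acyclic over `R`: all reduced simplicial homology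
groups with coefficients in `R` vanish. -/
def FlagAcyclic (G : SimpleGraph V) (R : Type) [CommRing R] : Prop :=
  Function.Surjective (flagAug G R) ∧
  LinearMap.ker (flagAug G R) = LinearMap.range (flagBdry G R 0) ∧
  ∀ k, LinearMap.ker (flagBdry G R k) = LinearMap.range (flagBdry G R (k + 1))


set_option linter.unusedSectionVars false
set_option linter.unusedVariables false
set_option maxHeartbeats 1000000
open scoped Classical

section Algebra

variable (G : SimpleGraph V) (R : Type) [CommRing R]

/-- The sign of a vertex in a finset. -/
def sgn (s : Finset V) (v : V) : R := (-1 : R) ^ (s.filter (· < v)).card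

instance (G : SimpleGraph V) (k : ℕ) : DecidableEq (FlagSimplex G k) :=
  fun a b => decidable_of_iff (a.1 = b.1) Subtype.ext_iff.symm

/-- The basis chain attached to a finset (zero if it is not a clique of the right size). -/
noncomputable def fchain (k : ℕ) (t : Finset V) : FlagChain G R k :=
  letI := Classical.dec (t.card = k + 1 ∧ G.IsClique (t : Set V))
  if h : t.card = k + 1 ∧ G.IsClique (t : Set V) then Finsupp.single (⟨t, h⟩ : FlagSimplex G k) 1
  else 0

variable {G R}

lemma fchain_of (k : ℕ) (t : Finset V) (h : t.card = k + 1 ∧ G.IsClique (t : Set V)) :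
    fchain G R k t = Finsupp.single (⟨t, h⟩ : FlagSimplex G k) 1 := by
  rw [fchain]; exact dif_pos h

lemma fchain_simplex (k : ℕ) (s : FlagSimplex G k) :
    fchain G R k s.1 = Finsupp.single s 1 := by
  rw [fchain_of k s.1 s.2]
  rcases s with ⟨s, hs⟩
  rfl

/-- support-in-a-set predicate for chains -/
def InSet {k : ℕ} (c : FlagChain G R k) (S : Finset V) : Prop :=
  ∀ t ∈ (c : FlagSimplex G k →₀ R).support, (t : FlagSimplex G k).1 ⊆ S

lemma apply_eq_sum {k : ℕ} {M : Type} [AddCommGroup M] [Module R M]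
    (F : FlagChain G R k →ₗ[R] M) (c : FlagSimplex G k →₀ R) :
    F c = ∑ t ∈ c.support, c t • F (Finsupp.single t 1) := by
  conv_lhs => rw [← Finsupp.sum_single c]
  erw [map_finsuppSum]
  refine Finset.sum_congr rfl fun t ht => ?_
  show F (Finsupp.single t (c t)) = c t • F (Finsupp.single t 1)
  erw [← Finsupp.smul_single_one, map_smul]

lemma linear_ext_on {k : ℕ} {M : Type} [AddCommGroup M] [Module R M]
    (P : FlagSimplex G k → Prop)
    (F₁ F₂ : FlagChain G R k →ₗ[R] M)
    (h : ∀ t, P t → F₁ (Finsupp.single t 1) = F₂ (Finsupp.single t 1))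
    (c : FlagSimplex G k →₀ R) (hc : ∀ t ∈ c.support, P t) : F₁ c = F₂ c := by
  rw [apply_eq_sum F₁ c, apply_eq_sum F₂ c]
  exact Finset.sum_congr rfl fun t ht => by rw [h t (hc t ht)]

lemma InSet_sum {k : ℕ} {ι : Type} (I : Finset ι) (f : ι → FlagSimplex G k →₀ R) (S : Finset V)
    (h : ∀ i ∈ I, InSet (f i : FlagChain G R k) S) : InSet (∑ i ∈ I, f i : FlagChain G R k) S := by
  intro t ht
  have := Finsupp.support_finset_sum (s := I) (f := f) ht
  rw [Finset.mem_biUnion] at this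
  obtain ⟨i, hi, hti⟩ := this
  exact h i hi t hti

lemma InSet_smul {k : ℕ} (r : R) (c : FlagSimplex G k →₀ R) (S : Finset V)
    (h : InSet (c : FlagChain G R k) S) : InSet (r • c : FlagChain G R k) S := by
  intro t ht
  exact h t (Finsupp.support_smul ht)

lemma InSet_single {k : ℕ} (t : FlagSimplex G k) (r : R) (S : Finset V) (h : t.1 ⊆ S) :
    InSet (Finsupp.single t r : FlagChain G R k) S := by
  intro x hx
  have := Finsupp.support_single_subset hx
  rw [Finset.mem_singleton] at this
  rwa [this]

lemma InSet_zero {k : ℕ} (S : Finset V) : InSet (0 : FlagChain G R k) S := by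
  intro t ht
  erw [Finsupp.support_zero] at ht; simp at ht

lemma InSet_fchain (k : ℕ) (t : Finset V) (S : Finset V) (h : t ⊆ S) :
    InSet (fchain G R k t) S := by
  by_cases h2 : t.card = k + 1 ∧ G.IsClique (t : Set V)
  · rw [fchain_of k t h2]
    exact InSet_single _ _ _ h
  · erw [fchain, dif_neg h2]
    exact InSet_zero S

lemma InSet_mono {k : ℕ} {c : FlagChain G R k} {S S' : Finset V} (hss : S ⊆ S')
    (h : InSet c S) : InSet c S' := fun t ht => (h t ht).trans hss

lemma InSet_apply {k m : ℕ} (F : FlagChain G R k →ₗ[R] FlagChain G R m)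
    (P : FlagSimplex G k → Prop) (S : Finset V)
    (h : ∀ t, P t → InSet (F (Finsupp.single t 1)) S)
    (c : FlagSimplex G k →₀ R) (hc : ∀ t ∈ c.support, P t) : InSet (F c) S := by
  rw [apply_eq_sum F c]
  exact InSet_sum _ _ _ fun t ht => InSet_smul _ _ _ (h t (hc t ht))

/-- Expansion of the boundary map on a single basis element. -/
lemma flagBdry_single (k : ℕ) (s : FlagSimplex G (k+1)) (r : R) :
    flagBdry G R k (Finsupp.single s r) =
      r • ∑ w ∈ s.1, sgn R s.1 w • fchain G R k (s.1.erase w) := by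
  show (Finsupp.lsum R _) (Finsupp.single s r) = _
  rw [Finsupp.lsum_single, LinearMap.toSpanSingleton_apply]
  congr 1
  rw [← Finset.sum_attach s.1 (fun w => sgn R s.1 w • fchain G R k (s.1.erase w))]
  refine Finset.sum_congr rfl fun v _ => ?_
  congr 1
  rw [fchain_of k (s.1.erase v.1) ⟨by rw [Finset.card_erase_of_mem v.2, s.2.1]; rfl,
    s.2.2.subset (by exact_mod_cast Finset.coe_subset.2 (Finset.erase_subset _ _))⟩]

end Algebra

section SignLemmas

variable {G : SimpleGraph V} {R : Type} [CommRing R]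

lemma sgn_mul_self (s : Finset V) (v : V) : (sgn R s v) * sgn R s v = 1 := by
  rw [sgn, ← pow_add]
  exact Even.neg_one_pow ⟨_, rfl⟩

lemma sgn_swap_core {z w : V} (s : Finset V) (hz : z ∈ s) (hzw : z < w) :
    sgn R s w * sgn R (s.erase w) z = -(sgn R s z * sgn R (s.erase z) w) := by
  have e1 : (s.erase w).filter (· < z) = s.filter (· < z) := by
    rw [Finset.filter_erase, Finset.erase_eq_of_notMem]
    intro hmem
    exact absurd (Finset.mem_filter.1 hmem).2 (not_lt.2 hzw.le)
  have e2 : (s.erase z).filter (· < w) = (s.filter (· < w)).erase z := Finset.filter_erase _ _ _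
  have hzm : z ∈ s.filter (· < w) := Finset.mem_filter.2 ⟨hz, hzw⟩
  have hpos : 0 < (s.filter (· < w)).card := Finset.card_pos.2 ⟨z, hzm⟩
  have ha : (s.filter (· < w)).card = ((s.filter (· < w)).card - 1) + 1 :=
    (Nat.succ_pred_eq_of_pos hpos).symm
  rw [sgn, sgn, sgn, sgn, e1, e2, Finset.card_erase_of_mem hzm]
  conv_lhs => rw [ha]
  rw [pow_succ]
  ring

lemma sgn_swap {z w : V} (s : Finset V) (hz : z ∈ s) (hw : w ∈ s) (hne : z ≠ w) :
    sgn R s w * sgn R (s.erase w) z = -(sgn R s z * sgn R (s.erase z) w) := by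
  rcases hne.lt_or_gt with h | h
  · exact sgn_swap_core s hz h
  · rw [sgn_swap_core s hw h, neg_neg]

lemma sgn_insert_self {u : V} (s : Finset V) (hu : u ∉ s) :
    sgn R (insert u s) u = sgn R s u := by
  rw [sgn, sgn, Finset.filter_insert, if_neg (lt_irrefl u)]

lemma sgn_erase_self {u : V} (s : Finset V) :
    sgn R (s.erase u) u = sgn R s u := by
  rw [sgn, sgn, Finset.filter_erase, Finset.erase_eq_of_notMem]
  intro hmem
  exact absurd (Finset.mem_filter.1 hmem).2 (lt_irrefl u)

lemma sgn_insert_of_ne {u w : V} (s : Finset V) (hu : u ∉ s) :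
    sgn R (insert u s) w = (if u < w then -1 else 1) * sgn R s w := by
  rw [sgn, sgn, Finset.filter_insert]
  by_cases h : u < w
  · rw [if_pos h, if_pos h, Finset.card_insert_of_notMem (fun hc => hu (Finset.mem_filter.1 hc).1),
      pow_succ]
    ring
  · rw [if_neg h, if_neg h, one_mul]

lemma sgn_erase_of_ne {u w : V} (s : Finset V) (hw : w ∈ s) (hne : w ≠ u) :
    sgn R (s.erase w) u = (if w < u then -1 else 1) * sgn R s u := by
  by_cases h : w < u
  · have hmem : w ∈ s.filter (· < u) := Finset.mem_filter.2 ⟨hw, h⟩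
    have hpos : 0 < (s.filter (· < u)).card := Finset.card_pos.2 ⟨w, hmem⟩
    have ha : (s.filter (· < u)).card = ((s.filter (· < u)).card - 1) + 1 :=
      (Nat.succ_pred_eq_of_pos hpos).symm
    rw [sgn, sgn, Finset.filter_erase, Finset.card_erase_of_mem hmem]
    rw [if_pos h]
    conv_rhs => rw [ha]
    rw [pow_succ]
    ring
  · rw [sgn, sgn, Finset.filter_erase, if_neg h, Finset.erase_eq_of_notMem, one_mul]
    intro hmem
    exact h (Finset.mem_filter.1 hmem).2

lemma key_cancel {u w : V} (s : Finset V) (hu : u ∉ s) (hw : w ∈ s) :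
    sgn R s u * sgn R (insert u s) w = -(sgn R s w * sgn R (s.erase w) u) := by
  have hne : w ≠ u := fun h => hu (h ▸ hw)
  rw [sgn_insert_of_ne s hu, sgn_erase_of_ne s hw hne]
  rcases lt_or_gt_of_ne hne with h | h
  · rw [if_neg (asymm h), if_pos h]
    ring
  · rw [if_pos h, if_neg (asymm h)]
    ring

end SignLemmas

section BdryLemmas

variable {G : SimpleGraph V} {R : Type} [CommRing R]

lemma flagBdry_fchain (k : ℕ) (t : Finset V) (h : t.card = k + 2) (hc : G.IsClique (t : Set V)) :
    flagBdry G R k (fchain G R (k+1) t) = ∑ w ∈ t, sgn R t w • fchain G R k (t.erase w) := by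
  erw [fchain_of (k+1) t ⟨h, hc⟩, flagBdry_single, one_smul]

lemma clique_erase {t : Finset V} (hc : G.IsClique (t : Set V)) (w : V) :
    G.IsClique ((t.erase w : Finset V) : Set V) :=
  hc.subset (by exact_mod_cast Finset.coe_subset.2 (Finset.erase_subset _ _))

/-- ∂∂ = 0 on basis elements. -/
lemma bdry_bdry_single (k : ℕ) (s : FlagSimplex G (k+2)) :
    flagBdry G R k (flagBdry G R (k+1) (Finsupp.single s (1:R))) = 0 := by
  rw [flagBdry_single, one_smul, map_sum]
  have hstep : ∀ w ∈ s.1, flagBdry G R k (sgn R s.1 w • fchain G R (k+1) (s.1.erase w)) =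
      ∑ z ∈ s.1.erase w, (sgn R s.1 w * sgn R (s.1.erase w) z) • fchain G R k ((s.1.erase w).erase z) := by
    intro w hw
    rw [map_smul, flagBdry_fchain k _ (by rw [Finset.card_erase_of_mem hw, s.2.1]; rfl) (clique_erase s.2.2 w),
      Finset.smul_sum]
    exact Finset.sum_congr rfl fun z _ => smul_smul _ _ _
  rw [Finset.sum_congr rfl hstep, Finset.sum_sigma']
  refine Finset.sum_involution (fun p _ => ⟨p.2, p.1⟩) ?_ ?_ ?_ ?_
  · intro p hp
    rw [Finset.mem_sigma] at hp
    obtain ⟨h1, h2⟩ := hp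
    have hz : p.2 ∈ s.1 := Finset.mem_of_mem_erase h2
    have hne : p.2 ≠ p.1 := Finset.ne_of_mem_erase h2
    have hcomm : (s.1.erase p.1).erase p.2 = (s.1.erase p.2).erase p.1 := by
      ext x; simp only [Finset.mem_erase]; tauto
    show (sgn R s.1 p.1 * sgn R (s.1.erase p.1) p.2) • fchain G R k ((s.1.erase p.1).erase p.2) +
      (sgn R s.1 p.2 * sgn R (s.1.erase p.2) p.1) • fchain G R k ((s.1.erase p.2).erase p.1) = 0
    rw [← hcomm, ← add_smul, sgn_swap s.1 hz h1 hne, neg_add_cancel, zero_smul]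
  · intro p hp _
    rw [Finset.mem_sigma] at hp
    intro hc
    have hne : p.2 ≠ p.1 := Finset.ne_of_mem_erase hp.2
    exact hne (congrArg Sigma.fst hc)
  · intro p hp
    rw [Finset.mem_sigma] at hp ⊢
    have hz : p.2 ∈ s.1 := Finset.mem_of_mem_erase hp.2
    have hne : p.2 ≠ p.1 := Finset.ne_of_mem_erase hp.2
    exact ⟨hz, Finset.mem_erase.2 ⟨fun h => hne h.symm, hp.1⟩⟩
  · intro p hp
    rfl

lemma bdry_bdry (k : ℕ) (c : FlagSimplex G (k+2) →₀ R) :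
    flagBdry G R k (flagBdry G R (k+1) c) = 0 := by
  have := linear_ext_on (fun _ => True)
    ((flagBdry G R k).comp (flagBdry G R (k+1))) (0 : FlagChain G R (k+2) →ₗ[R] FlagChain G R k)
    (fun t _ => by
      show flagBdry G R k (flagBdry G R (k+1) (Finsupp.single t 1)) = 0
      exact bdry_bdry_single k t) c (fun _ _ => trivial)
  exact this

lemma flagAug_single (s : FlagSimplex G 0) (r : R) : flagAug G R (Finsupp.single s r) = r := by
  show (Finsupp.lsum R _) (Finsupp.single s r) = r
  rw [Finsupp.lsum_single]
  rfl

lemma flagAug_fchain (t : Finset V) (h : t.card = 1) (hc : G.IsClique (t : Set V)) :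
    flagAug G R (fchain G R 0 t) = 1 := by
  erw [fchain_of 0 t ⟨h, hc⟩, flagAug_single]

lemma sgn_pair_sum {a b : V} (hab : a ≠ b) : sgn R {a, b} a + sgn R {a, b} b = 0 := by
  rcases hab.lt_or_gt with h | h
  · have e1 : ({a, b} : Finset V).filter (· < a) = ∅ := by
      rw [Finset.filter_insert, if_neg (lt_irrefl a), Finset.filter_singleton, if_neg (asymm h)]
    have e2 : ({a, b} : Finset V).filter (· < b) = {a} := by
      rw [Finset.filter_insert, if_pos h, Finset.filter_singleton, if_neg (lt_irrefl b)]
      rfl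
    rw [sgn, sgn, e1, e2]
    simp
  · have e1 : ({a, b} : Finset V).filter (· < a) = {b} := by
      rw [Finset.filter_insert, if_neg (lt_irrefl a), Finset.filter_singleton, if_pos h]
    have e2 : ({a, b} : Finset V).filter (· < b) = ∅ := by
      rw [Finset.filter_insert, if_neg (asymm h), Finset.filter_singleton, if_neg (lt_irrefl b)]
    rw [sgn, sgn, e1, e2]
    simp

lemma aug_bdry_single (s : FlagSimplex G 1) :
    flagAug G R (flagBdry G R 0 (Finsupp.single s (1:R))) = 0 := by
  rw [flagBdry_single, one_smul, map_sum]
  have hstep : ∀ w ∈ s.1, flagAug G R (sgn R s.1 w • fchain G R 0 (s.1.erase w)) = sgn R s.1 w := by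
    intro w hw
    rw [map_smul, flagAug_fchain _ (by rw [Finset.card_erase_of_mem hw, s.2.1]) (clique_erase s.2.2 w),
      smul_eq_mul, mul_one]
  rw [Finset.sum_congr rfl hstep]
  obtain ⟨a, b, hab, hs⟩ := Finset.card_eq_two.1 s.2.1
  rw [hs, Finset.sum_insert (by simp [hab]), Finset.sum_singleton]
  have := sgn_pair_sum (R := R) hab
  rw [← hs] at this ⊢
  rw [hs] at this ⊢
  exact this

lemma aug_bdry (c : FlagSimplex G 1 →₀ R) : flagAug G R (flagBdry G R 0 c) = 0 := by
  have := linear_ext_on (fun _ => True)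
    ((flagAug G R).comp (flagBdry G R 0)) (0 : FlagChain G R 1 →ₗ[R] R)
    (fun t _ => by
      show flagAug G R (flagBdry G R 0 (Finsupp.single t 1)) = 0
      exact aug_bdry_single t) c (fun _ _ => trivial)
  exact this

/-- Boundary of a cone simplex, raw form. -/
lemma bdry_insert (k : ℕ) (s : Finset V) (u : V) (hu : u ∉ s) (hcard : s.card = k + 1)
    (hclq : G.IsClique ((insert u s : Finset V) : Set V)) :
    flagBdry G R k (fchain G R (k+1) (insert u s)) =
      sgn R (insert u s) u • fchain G R k s +
        ∑ w ∈ s, sgn R (insert u s) w • fchain G R k (insert u (s.erase w)) := by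
  rw [flagBdry_fchain k _ (by rw [Finset.card_insert_of_notMem hu, hcard]) hclq,
    Finset.sum_insert hu]
  congr 1
  · rw [Finset.erase_insert hu]
  · refine Finset.sum_congr rfl fun w hw => ?_
    congr 1
    rw [Finset.erase_insert_of_ne (fun h => hu (by rw [h]; exact hw))]

end BdryLemmas

section Homotopy

variable {G : SimpleGraph V} {R : Type} [CommRing R]

variable (G R) in
/-- The cone operator sending a simplex containing `v` but not `u` to its cone over `u`. -/
noncomputable def Dmap (v u : V) (k : ℕ) : FlagChain G R k →ₗ[R] FlagChain G R (k+1) :=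
  Finsupp.lsum R fun s => LinearMap.toSpanSingleton R _
    (letI := Classical.dec (v ∈ s.1 ∧ u ∉ s.1)
     if v ∈ s.1 ∧ u ∉ s.1 then sgn R s.1 u • fchain G R (k+1) (insert u s.1) else 0)

lemma Dmap_single (v u : V) (k : ℕ) (s : FlagSimplex G k) (r : R) :
    Dmap G R v u k (Finsupp.single s r) =
      (letI := Classical.dec (v ∈ s.1 ∧ u ∉ s.1)
       if v ∈ s.1 ∧ u ∉ s.1 then r • (sgn R s.1 u • fchain G R (k+1) (insert u s.1)) else 0) := by
  show (Finsupp.lsum R _) (Finsupp.single s r) = _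
  rw [Finsupp.lsum_single, LinearMap.toSpanSingleton_apply]
  split
  · rfl
  · exact smul_zero r

lemma Dmap_single_pos (v u : V) (k : ℕ) (s : FlagSimplex G k) (hv : v ∈ s.1) (hu : u ∉ s.1) :
    Dmap G R v u k (Finsupp.single s (1:R)) = sgn R s.1 u • fchain G R (k+1) (insert u s.1) := by
  rw [Dmap_single]
  rw [if_pos ⟨hv, hu⟩, one_smul]

lemma Dmap_single_neg (v u : V) (k : ℕ) (s : FlagSimplex G k) (h : ¬(v ∈ s.1 ∧ u ∉ s.1)) :
    Dmap G R v u k (Finsupp.single s (1:R)) = 0 := by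
  rw [Dmap_single]
  rw [if_neg h]

variable (G R) in
/-- The homotopy `phi = id - ∂D - D∂`. -/
noncomputable def phi (v u : V) : ∀ k, FlagChain G R k →ₗ[R] FlagChain G R k
  | 0 => LinearMap.id - (flagBdry G R 0).comp (Dmap G R v u 0)
  | (k+1) => LinearMap.id - (flagBdry G R (k+1)).comp (Dmap G R v u (k+1))
      - (Dmap G R v u k).comp (flagBdry G R k)

lemma phi_zero_apply (v u : V) (c : FlagChain G R 0) :
    phi G R v u 0 c = c - flagBdry G R 0 (Dmap G R v u 0 c) := rfl

lemma phi_succ_apply (v u : V) (k : ℕ) (c : FlagChain G R (k+1)) :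
    phi G R v u (k+1) c = c - flagBdry G R (k+1) (Dmap G R v u (k+1) c)
      - Dmap G R v u k (flagBdry G R k c) := rfl

/-- `phi` commutes with the boundary. -/
lemma phi_bdry (v u : V) (k : ℕ) (c : FlagChain G R (k+1)) :
    phi G R v u k (flagBdry G R k c) = flagBdry G R k (phi G R v u (k+1) c) := by
  have hb : flagBdry G R k (flagBdry G R (k+1) (Dmap G R v u (k+1) c)) = 0 := bdry_bdry k _
  cases k with
  | zero =>
    rw [phi_zero_apply, phi_succ_apply, map_sub, map_sub, hb, sub_zero]
  | succ k =>
    rw [phi_succ_apply, phi_succ_apply, map_sub, map_sub, hb, sub_zero]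
    have hb2 : flagBdry G R k (flagBdry G R (k+1) c) = 0 := bdry_bdry k _
    rw [hb2, map_zero, sub_zero]

/-- `flagAug` is preserved by `phi` in degree 0. -/
lemma aug_phi (v u : V) (c : FlagChain G R 0) :
    flagAug G R (phi G R v u 0 c) = flagAug G R c := by
  erw [phi_zero_apply, map_sub, aug_bdry, sub_zero]

end Homotopy

section CaseLemmas

variable {G : SimpleGraph V} {R : Type} [CommRing R]
variable {S : Finset V} {v u : V}

/-- The domination context. -/
structure Dom (G : SimpleGraph V) (S : Finset V) (v u : V) : Prop where
  hvS : v ∈ S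
  huS : u ∈ S
  hadj : G.Adj u v
  hdom : ∀ w ∈ S, G.Adj v w → w = u ∨ G.Adj u w

lemma Dom.huv (hd : Dom G S v u) : u ≠ v := hd.hadj.ne

lemma Dom.clique_insert (hd : Dom G S v u) {s : Finset V} (hs : G.IsClique (s : Set V))
    (hsub : s ⊆ S) (hv : v ∈ s) (hu : u ∉ s) : G.IsClique ((insert u s : Finset V) : Set V) := by
  rw [Finset.coe_insert, SimpleGraph.isClique_insert]
  refine ⟨hs, fun b hb hub => ?_⟩
  rcases eq_or_ne b v with rfl | hbv
  · exact hd.hadj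
  · have hadjvb : G.Adj v b := hs hv hb (Ne.symm hbv)
    rcases hd.hdom b (hsub hb) hadjvb with rfl | h
    · exact absurd rfl hub
    · exact h

/-- Case: `v ∉ s`. -/
lemma phi_single_nomem (hd : Dom G S v u) (k : ℕ) (s : FlagSimplex G k) (hv : v ∉ s.1) :
    phi G R v u k (Finsupp.single s (1:R)) = Finsupp.single s (1:R) := by
  have hD : Dmap G R v u k (Finsupp.single s (1:R)) = 0 :=
    Dmap_single_neg v u k s (fun h => hv h.1)
  cases k with
  | zero => erw [phi_zero_apply, hD, map_zero, sub_zero]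
  | succ k =>
    erw [phi_succ_apply, hD, map_zero, sub_zero]
    have hDb : Dmap G R v u k (flagBdry G R k (Finsupp.single s (1:R))) = 0 := by
      rw [flagBdry_single, one_smul, map_sum]
      refine Finset.sum_eq_zero fun w hw => ?_
      rw [map_smul]
      by_cases hcl : (s.1.erase w).card = k + 1 ∧ G.IsClique ((s.1.erase w : Finset V) : Set V)
      · erw [fchain_of k _ hcl, Dmap_single_neg v u k _ (fun h => hv (Finset.mem_of_mem_erase h.1)),
          smul_zero]
      · erw [fchain, dif_neg hcl, map_zero, smul_zero]
    erw [hDb, sub_zero]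

/-- Case: `v ∈ s` and `u ∈ s` (only possible in positive degree). -/
lemma phi_single_both (hd : Dom G S v u) (k : ℕ) (s : FlagSimplex G (k+1))
    (hv : v ∈ s.1) (hu : u ∈ s.1) :
    phi G R v u (k+1) (Finsupp.single s (1:R)) = 0 := by
  have hD : Dmap G R v u (k+1) (Finsupp.single s (1:R)) = 0 :=
    Dmap_single_neg v u (k+1) s (fun h => h.2 hu)
  erw [phi_succ_apply, hD, map_zero, sub_zero]
  have hface : ∀ w ∈ s.1, (s.1.erase w).card = k + 1 ∧ G.IsClique ((s.1.erase w : Finset V) : Set V) :=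
    fun w hw => ⟨by rw [Finset.card_erase_of_mem hw, s.2.1]; rfl, clique_erase s.2.2 w⟩
  have hDb : Dmap G R v u k (flagBdry G R k (Finsupp.single s (1:R))) = Finsupp.single s (1:R) := by
    rw [flagBdry_single, one_smul, map_sum]
    rw [Finset.sum_eq_single_of_mem u hu]
    · erw [map_smul, fchain_of k _ (hface u hu),
        Dmap_single_pos v u k _ (Finset.mem_erase.2 ⟨(Ne.symm hd.huv), hv⟩) (Finset.notMem_erase u _)]
      show sgn R s.1 u • sgn R (s.1.erase u) u • fchain G R (k+1) (insert u (s.1.erase u)) = _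
      rw [Finset.insert_erase hu, smul_smul, sgn_erase_self, sgn_mul_self, one_smul, fchain_simplex]
    · intro w hw hwu
      rw [map_smul]
      rw [fchain_of k _ (hface w hw)]
      by_cases hwv : w = v
      · erw [Dmap_single_neg v u k _ (fun h => by
          have h2 : v ∈ s.1.erase w := h.1
          rw [hwv] at h2
          exact Finset.notMem_erase v s.1 h2), smul_zero]
      · erw [Dmap_single_neg v u k _ (fun h => h.2 (Finset.mem_erase.2 ⟨Ne.symm hwu, hu⟩)), smul_zero]
  erw [hDb, sub_self]

/-- Case: `v ∈ s`, `u ∉ s`: the fold. -/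
lemma phi_single_mem (hd : Dom G S v u) (k : ℕ) (s : FlagSimplex G k)
    (hsub : s.1 ⊆ S) (hv : v ∈ s.1) (hu : u ∉ s.1) :
    phi G R v u k (Finsupp.single s (1:R)) =
      -((sgn R s.1 u * sgn R (insert u s.1) v) • fchain G R k (insert u (s.1.erase v))) := by
  have hclq : G.IsClique ((insert u s.1 : Finset V) : Set V) :=
    hd.clique_insert s.2.2 hsub hv hu
  have hD : Dmap G R v u k (Finsupp.single s (1:R)) = sgn R s.1 u • fchain G R (k+1) (insert u s.1) :=
    Dmap_single_pos v u k s hv hu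
  have hDbdry : flagBdry G R k (Dmap G R v u k (Finsupp.single s (1:R))) =
      fchain G R k s.1 +
        ∑ w ∈ s.1, (sgn R s.1 u * sgn R (insert u s.1) w) • fchain G R k (insert u (s.1.erase w)) := by
    rw [hD, map_smul, bdry_insert k s.1 u hu s.2.1 hclq, smul_add, smul_smul, sgn_insert_self _ hu,
      sgn_mul_self, one_smul, Finset.smul_sum]
    congr 1
    exact Finset.sum_congr rfl fun w hw => by rw [smul_smul]
  have hface : ∀ w ∈ s.1, (s.1.erase w).card = k ∧ G.IsClique ((s.1.erase w : Finset V) : Set V) :=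
    fun w hw => ⟨by rw [Finset.card_erase_of_mem hw, s.2.1]; rfl, clique_erase s.2.2 w⟩
  cases k with
  | zero =>
    -- s.1 = {v}
    have hsv : s.1 = {v} := by
      obtain ⟨a, ha⟩ := Finset.card_eq_one.1 s.2.1
      rw [ha] at hv ⊢
      rw [Finset.mem_singleton] at hv
      rw [hv]
    erw [phi_zero_apply, hDbdry]
    have h1 : ∑ w ∈ s.1, (sgn R s.1 u * sgn R (insert u s.1) w) • fchain G R 0 (insert u (s.1.erase w)) =
        (sgn R s.1 u * sgn R (insert u s.1) v) • fchain G R 0 (insert u (s.1.erase v)) := by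
      rw [hsv, Finset.sum_singleton]
    rw [h1, ← fchain_simplex 0 s]
    abel
  | succ k =>
    have hDb : Dmap G R v u k (flagBdry G R k (Finsupp.single s (1:R))) =
        ∑ w ∈ s.1, (letI := Classical.dec (w = v); if w = v then 0 else
          (sgn R s.1 w * sgn R (s.1.erase w) u) • fchain G R (k+1) (insert u (s.1.erase w))) := by
      rw [flagBdry_single, one_smul, map_sum]
      refine Finset.sum_congr rfl fun w hw => ?_
      rw [map_smul, fchain_of k _ ⟨by rw [Finset.card_erase_of_mem hw, s.2.1]; rfl, clique_erase s.2.2 w⟩]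
      split
      · next hwv =>
        erw [Dmap_single_neg v u k _ (fun h => by
          have h2 : v ∈ s.1.erase w := h.1
          rw [hwv] at h2
          exact Finset.notMem_erase v s.1 h2), smul_zero]
      · next hwv =>
        erw [Dmap_single_pos v u k _ (Finset.mem_erase.2 ⟨fun h => hwv h.symm, hv⟩)
          (fun h => hu (Finset.mem_of_mem_erase h)), smul_smul]
    erw [phi_succ_apply, hDbdry, hDb, ← fchain_simplex (k+1) s]
    have hsplit : ∀ w ∈ s.1, w ≠ v →
        (sgn R s.1 u * sgn R (insert u s.1) w) • fchain G R (k+1) (insert u (s.1.erase w)) +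
        (letI := Classical.dec (w = v); if w = v then 0 else
          (sgn R s.1 w * sgn R (s.1.erase w) u) • fchain G R (k+1) (insert u (s.1.erase w))) = 0 := by
      intro w hw hwv
      rw [if_neg hwv, ← add_smul, key_cancel s.1 hu hw, neg_add_cancel, zero_smul]
    -- now compute
    have hsum : fchain G R (k+1) s.1 +
        ∑ w ∈ s.1, (sgn R s.1 u * sgn R (insert u s.1) w) • fchain G R (k+1) (insert u (s.1.erase w)) +
        ∑ w ∈ s.1, (letI := Classical.dec (w = v); if w = v then 0 else
          (sgn R s.1 w * sgn R (s.1.erase w) u) • fchain G R (k+1) (insert u (s.1.erase w))) =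
        fchain G R (k+1) s.1 +
          (sgn R s.1 u * sgn R (insert u s.1) v) • fchain G R (k+1) (insert u (s.1.erase v)) := by
      rw [add_assoc, ← Finset.sum_add_distrib]
      congr 1
      rw [Finset.sum_eq_single_of_mem v hv]
      · rw [if_pos rfl, add_zero]
      · intro w hw hwv
        exact hsplit w hw hwv
    have h3 : ∑ w ∈ s.1, (sgn R s.1 u * sgn R (insert u s.1) w) • fchain G R (k+1) (insert u (s.1.erase w)) +
        ∑ w ∈ s.1, (letI := Classical.dec (w = v); if w = v then 0 else
          (sgn R s.1 w * sgn R (s.1.erase w) u) • fchain G R (k+1) (insert u (s.1.erase w))) =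
        (sgn R s.1 u * sgn R (insert u s.1) v) • fchain G R (k+1) (insert u (s.1.erase v)) := by
      apply add_left_cancel (a := fchain G R (k+1) s.1)
      rw [← add_assoc, hsum]
    rw [← h3]
    abel

end CaseLemmas

section Contraction

variable {G : SimpleGraph V} {R : Type} [CommRing R]

variable (G R) in
/-- A contraction (chain homotopy to a point) of the part of the flag complex of `G`
spanned by cliques inside `S`. -/
structure Contraction (S : Finset V) where
  c0 : FlagChain G R 0
  hh : ∀ k, FlagChain G R k →ₗ[R] FlagChain G R (k+1)
  c0_in : InSet c0 S
  c0_aug : flagAug G R c0 = 1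
  hh_in : ∀ k (c : FlagChain G R k), InSet c S → InSet (hh k c) S
  deg0 : ∀ c : FlagChain G R 0, InSet c S →
    flagBdry G R 0 (hh 0 c) = c - (flagAug G R c) • c0
  degk : ∀ k (c : FlagChain G R (k+1)), InSet c S →
    flagBdry G R (k+1) (hh (k+1) c) + hh k (flagBdry G R k c) = c

/-- The base case: a single vertex. -/
noncomputable def contractionBase (b : V) : Contraction G R {b} where
  c0 := fchain G R 0 {b}
  hh := fun _ => 0
  c0_in := InSet_fchain 0 {b} {b} (Finset.Subset.refl _)
  c0_aug := flagAug_fchain {b} (Finset.card_singleton b) (by simp)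
  hh_in := fun k c _ => by
    rw [LinearMap.zero_apply]
    exact InSet_zero {b}
  deg0 := by
    intro c hc
    rw [LinearMap.zero_apply, map_zero]
    have : c = (flagAug G R c) • fchain G R 0 {b} := by
      have := linear_ext_on (fun t => t.1 ⊆ {b}) (LinearMap.id : FlagChain G R 0 →ₗ[R] FlagChain G R 0)
        ((LinearMap.toSpanSingleton R _ (fchain G R 0 {b})).comp (flagAug G R))
        (fun t ht => by
          show Finsupp.single t 1 = flagAug G R (Finsupp.single t 1) • fchain G R 0 {b}
          have hts : t.1 = {b} := by
            have hne : t.1.Nonempty := Finset.card_pos.1 (by rw [t.2.1]; omega)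
            rcases Finset.subset_singleton_iff.1 ht with h | h
            · rw [h] at hne; exact absurd hne Finset.not_nonempty_empty
            · exact h
          rw [flagAug_single, one_smul, ← hts, fchain_simplex])
        c hc
      simpa using this
    rw [← this, sub_self]
  degk := by
    intro k c hc
    rw [LinearMap.zero_apply, map_zero, LinearMap.zero_apply, add_zero]
    symm
    have hzero : (c : FlagSimplex G (k+1) →₀ R) = 0 := by
      erw [← Finsupp.support_eq_empty, Finset.eq_empty_iff_forall_notMem]
      intro t ht
      have hsub := hc t ht
      have hcard := Finset.card_le_card hsub
      rw [t.2.1, Finset.card_singleton] at hcard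
      omega
    exact hzero

/-- The inductive step: fold a dominated vertex `v` onto `u`. -/
noncomputable def contractionStep {S : Finset V} {v u : V} (hd : Dom G S v u)
    (C : Contraction G R (S.erase v)) : Contraction G R S where
  c0 := C.c0
  hh := fun k => Dmap G R v u k + (C.hh k).comp (phi G R v u k)
  c0_in := InSet_mono (Finset.erase_subset v S) C.c0_in
  c0_aug := C.c0_aug
  hh_in := by
    intro k c hc
    rw [LinearMap.add_apply]
    have h1 : InSet (Dmap G R v u k c) S := by
      refine InSet_apply (Dmap G R v u k) (fun t => t.1 ⊆ S) S ?_ c hc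
      intro t ht
      rw [Dmap_single]
      split
      · rw [one_smul]
        exact InSet_smul _ _ _ (InSet_fchain _ _ _ (Finset.insert_subset hd.huS ht))
      · exact InSet_zero S
    have hphi : InSet (phi G R v u k c) (S.erase v) := by
      refine InSet_apply (phi G R v u k) (fun t => t.1 ⊆ S) (S.erase v) ?_ c hc
      intro t ht
      by_cases hv : v ∈ t.1
      · by_cases hu : u ∈ t.1
        · cases k with
          | zero =>
            exfalso
            have : u = v := by
              have h1 := Finset.card_eq_one.1 t.2.1
              obtain ⟨a, ha⟩ := h1
              rw [ha, Finset.mem_singleton] at hv hu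
              rw [hv, hu]
            exact hd.huv this
          | succ k =>
            rw [phi_single_both hd k t hv hu]
            exact InSet_zero _
        · rw [phi_single_mem hd k t ht hv hu]
          have hub : insert u (t.1.erase v) ⊆ S.erase v := by
            refine Finset.insert_subset ?_ ?_
            · exact Finset.mem_erase.2 ⟨hd.huv, hd.huS⟩
            · intro x hx
              exact Finset.mem_erase.2 ⟨Finset.ne_of_mem_erase hx, ht (Finset.mem_of_mem_erase hx)⟩
          rw [← neg_smul]
          exact InSet_smul _ _ _ (InSet_fchain _ _ _ hub)
      · rw [phi_single_nomem hd k t hv]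
        exact InSet_single _ _ _ (fun x hx => Finset.mem_erase.2 ⟨fun he => hv (he ▸ hx), ht hx⟩)
    rw [LinearMap.comp_apply]
    exact fun t ht => by
      have := Finsupp.support_add (g₁ := Dmap G R v u k c) (g₂ := (C.hh k) (phi G R v u k c)) ht
      rw [Finset.mem_union] at this
      rcases this with h | h
      · exact h1 t h
      · exact InSet_mono (Finset.erase_subset v S) (C.hh_in k _ hphi) t h
  deg0 := by
    intro c hc
    have hphi : InSet (phi G R v u 0 c) (S.erase v) := by
      refine InSet_apply (phi G R v u 0) (fun t => t.1 ⊆ S) (S.erase v) ?_ c hc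
      intro t ht
      by_cases hv : v ∈ t.1
      · have hu : u ∉ t.1 := by
          intro hu
          obtain ⟨a, ha⟩ := Finset.card_eq_one.1 t.2.1
          rw [ha, Finset.mem_singleton] at hv hu
          exact hd.huv (hu.trans hv.symm)
        rw [phi_single_mem hd 0 t ht hv hu]
        have hub : insert u (t.1.erase v) ⊆ S.erase v := by
          refine Finset.insert_subset (Finset.mem_erase.2 ⟨hd.huv, hd.huS⟩) ?_
          intro x hx
          exact Finset.mem_erase.2 ⟨Finset.ne_of_mem_erase hx, ht (Finset.mem_of_mem_erase hx)⟩
        rw [← neg_smul]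
        exact InSet_smul _ _ _ (InSet_fchain _ _ _ hub)
      · rw [phi_single_nomem hd 0 t hv]
        exact InSet_single _ _ _ (fun x hx => Finset.mem_erase.2 ⟨fun he => hv (he ▸ hx), ht hx⟩)
    rw [LinearMap.add_apply, map_add]
    have h1 : flagBdry G R 0 (Dmap G R v u 0 c) = c - phi G R v u 0 c := by
      rw [phi_zero_apply]; abel
    have h2 : flagBdry G R 0 ((C.hh 0) (phi G R v u 0 c)) =
        phi G R v u 0 c - (flagAug G R (phi G R v u 0 c)) • C.c0 := C.deg0 _ hphi
    rw [LinearMap.comp_apply, h1, h2, aug_phi]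
    abel
  degk := by
    intro k c hc
    have hphik : ∀ m (d : FlagChain G R m), InSet d S → InSet (phi G R v u m d) (S.erase v) := by
      intro m d hd2
      refine InSet_apply (phi G R v u m) (fun t => t.1 ⊆ S) (S.erase v) ?_ d hd2
      intro t ht
      by_cases hv : v ∈ t.1
      · by_cases hu : u ∈ t.1
        · cases m with
          | zero =>
            exfalso
            obtain ⟨a, ha⟩ := Finset.card_eq_one.1 t.2.1
            rw [ha, Finset.mem_singleton] at hv hu
            exact hd.huv (hu.trans hv.symm)
          | succ m =>
            rw [phi_single_both hd m t hv hu]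
            exact InSet_zero _
        · rw [phi_single_mem hd m t ht hv hu]
          have hub : insert u (t.1.erase v) ⊆ S.erase v := by
            refine Finset.insert_subset (Finset.mem_erase.2 ⟨hd.huv, hd.huS⟩) ?_
            intro x hx
            exact Finset.mem_erase.2 ⟨Finset.ne_of_mem_erase hx, ht (Finset.mem_of_mem_erase hx)⟩
          rw [← neg_smul]
          exact InSet_smul _ _ _ (InSet_fchain _ _ _ hub)
      · rw [phi_single_nomem hd m t hv]
        exact InSet_single _ _ _ (fun x hx => Finset.mem_erase.2 ⟨fun he => hv (he ▸ hx), ht hx⟩)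
    have hbd_in : InSet (flagBdry G R k c) S := by
      refine InSet_apply (flagBdry G R k) (fun t => t.1 ⊆ S) S ?_ c hc
      intro t ht
      rw [flagBdry_single, one_smul]
      refine InSet_sum _ _ _ fun w hw => ?_
      refine InSet_smul _ _ _ (InSet_fchain _ _ _ ?_)
      exact (Finset.erase_subset _ _).trans ht
    rw [LinearMap.add_apply, LinearMap.add_apply, map_add, LinearMap.comp_apply, LinearMap.comp_apply]
    have key1 : flagBdry G R (k+1) (Dmap G R v u (k+1) c) + Dmap G R v u k (flagBdry G R k c) =
        c - phi G R v u (k+1) c := by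
      rw [phi_succ_apply]; abel
    have key2 : flagBdry G R (k+1) ((C.hh (k+1)) (phi G R v u (k+1) c)) +
        (C.hh k) (flagBdry G R k (phi G R v u (k+1) c)) = phi G R v u (k+1) c :=
      C.degk k _ (hphik (k+1) c hc)
    have key3 : (C.hh k) (phi G R v u k (flagBdry G R k c)) =
        (C.hh k) (flagBdry G R k (phi G R v u (k+1) c)) := by
      rw [phi_bdry]
    calc flagBdry G R (k+1) (Dmap G R v u (k+1) c) +
          flagBdry G R (k+1) ((C.hh (k+1)) (phi G R v u (k+1) c)) +
          (Dmap G R v u k (flagBdry G R k c) + (C.hh k) (phi G R v u k (flagBdry G R k c)))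
        = (flagBdry G R (k+1) (Dmap G R v u (k+1) c) + Dmap G R v u k (flagBdry G R k c)) +
          (flagBdry G R (k+1) ((C.hh (k+1)) (phi G R v u (k+1) c)) +
            (C.hh k) (flagBdry G R k (phi G R v u (k+1) c))) := by
          rw [key3]; abel
      _ = (c - phi G R v u (k+1) c) + phi G R v u (k+1) c := by rw [key1, key2]
      _ = c := by abel

end Contraction

section GraphReach

variable {G : SimpleGraph V}

/-- Reachability within a vertex set `P` (the start needs not be in `P`). -/
def reachIn (G : SimpleGraph V) (P : Finset V) (x y : V) : Prop :=
  Relation.ReflTransGen (fun a b => b ∈ P ∧ G.Adj a b) x y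

lemma reachIn.refl (G : SimpleGraph V) (P : Finset V) (x : V) : reachIn G P x x :=
  Relation.ReflTransGen.refl

lemma reachIn.trans {P : Finset V} {x y z : V} (h1 : reachIn G P x y) (h2 : reachIn G P y z) :
    reachIn G P x z := Relation.ReflTransGen.trans h1 h2

lemma reachIn.mem_of {P : Finset V} {x y : V} (h : reachIn G P x y) (hx : x ∈ P) : y ∈ P := by
  induction h with
  | refl => exact hx
  | tail _ h2 _ => exact h2.1

lemma reachIn.symm {P : Finset V} {x y : V} (h : reachIn G P x y) (hx : x ∈ P) :
    reachIn G P y x := by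
  induction h with
  | refl => exact Relation.ReflTransGen.refl
  | @tail b y' h1 h2 ih =>
    exact Relation.ReflTransGen.head ⟨reachIn.mem_of h1 hx, h2.2.symm⟩ ih

lemma reachIn.mono {P Q : Finset V} (hPQ : P ⊆ Q) {x y : V} (h : reachIn G P x y) :
    reachIn G Q x y := by
  induction h with
  | refl => exact Relation.ReflTransGen.refl
  | tail _ h2 ih => exact ih.tail ⟨hPQ h2.1, h2.2⟩

variable (G) in
/-- The reachability component of `a` within `P`. -/
noncomputable def gcomp (P : Finset V) (a : V) : Finset V :=
  P.filter (fun z => reachIn G P a z)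

lemma mem_gcomp {P : Finset V} {a z : V} : z ∈ gcomp G P a ↔ z ∈ P ∧ reachIn G P a z :=
  Finset.mem_filter

lemma gcomp_subset (P : Finset V) (a : V) : gcomp G P a ⊆ P := Finset.filter_subset _ _

lemma mem_gcomp_self {P : Finset V} {a : V} (ha : a ∈ P) : a ∈ gcomp G P a :=
  mem_gcomp.2 ⟨ha, reachIn.refl G P a⟩

lemma gcomp_closed {P : Finset V} {a z w : V} (hz : z ∈ gcomp G P a) (hw : w ∈ P)
    (hadj : G.Adj z w) : w ∈ gcomp G P a :=
  mem_gcomp.2 ⟨hw, (mem_gcomp.1 hz).2.tail ⟨hw, hadj⟩⟩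

lemma reach_gcomp {P : Finset V} {a z : V} (ha : a ∈ P) (h : reachIn G P a z) :
    reachIn G (gcomp G P a) a z := by
  induction h with
  | refl => exact Relation.ReflTransGen.refl
  | @tail b y' h1 h2 ih =>
    exact ih.tail ⟨mem_gcomp.2 ⟨h2.1, h1.tail h2⟩, h2.2⟩

end GraphReach

section GraphPath

variable {G : SimpleGraph V}

/-- A combinatorial path from `x` to `y` with interior inside `A`, as a function. -/
def FPath (G : SimpleGraph V) (A : Finset V) (x y : V) (c : ℕ → V) (n : ℕ) : Prop :=
  c 0 = x ∧ c n = y ∧ (∀ i, i < n → G.Adj (c i) (c (i+1))) ∧ (∀ i, 0 < i → i < n → c i ∈ A)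

lemma reachIn.toFun {P : Finset V} {x y : V} (h : reachIn G P x y) :
    ∃ (c : ℕ → V) (n : ℕ), c 0 = x ∧ c n = y ∧ (∀ i, i < n → G.Adj (c i) (c (i+1))) ∧
      (∀ i, 0 < i → i ≤ n → c i ∈ P) := by
  induction h with
  | refl => exact ⟨fun _ => x, 0, rfl, rfl, fun i hi => absurd hi (by omega), fun i hi hi' => by omega⟩
  | @tail b y' h1 h2 ih =>
    obtain ⟨c, n, hc0, hcn, hadj, hmem⟩ := ih
    refine ⟨fun i => if i ≤ n then c i else y', n + 1, ?_, ?_, ?_, ?_⟩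
    · simp only [if_pos (Nat.zero_le n)]; exact hc0
    · simp only [if_neg (by omega : ¬ n + 1 ≤ n)]
    · intro i hi
      rcases Nat.lt_or_ge i n with h | h
      · simp only [if_pos (by omega : i ≤ n), if_pos (by omega : i + 1 ≤ n)]
        exact hadj i h
      · have hieq : i = n := by omega
        subst hieq
        simp only [if_pos (le_refl i), if_neg (by omega : ¬ i + 1 ≤ i)]
        rw [hcn]
        exact h2.2
    · intro i hi hi'
      rcases Nat.lt_or_ge n i with h | h
      · simp only [if_neg (by omega : ¬ i ≤ n)]
        exact h2.1
      · simp only [if_pos h]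
        exact hmem i hi h

/-- Build an `FPath` through `A` given neighbours of `x` and `y` inside `A` that are
connected within `A`. -/
lemma fpath_glue {A : Finset V} {x y a1 a2 : V} (h1 : G.Adj x a1) (h2 : G.Adj a2 y)
    (ha1 : a1 ∈ A) (hr : reachIn G A a1 a2) :
    ∃ (n : ℕ) (c : ℕ → V), FPath G A x y c n := by
  obtain ⟨c, m, hc0, hcm, hadj, hmem⟩ := hr.toFun
  refine ⟨m + 2, fun i => if i = 0 then x else if i ≤ m + 1 then c (i - 1) else y, ?_, ?_, ?_, ?_⟩
  · rfl
  · simp only [if_neg (by omega : ¬ m + 2 = 0), if_neg (by omega : ¬ m + 2 ≤ m + 1)]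
  · intro i hi
    rcases Nat.eq_or_lt_of_le (Nat.zero_le i) with h0 | h0
    · have hi : i = 0 := by omega
      subst hi
      show G.Adj x (if 0 + 1 = 0 then x else if 0 + 1 ≤ m + 1 then c (0 + 1 - 1) else y)
      rw [if_neg (by omega : ¬ 0 + 1 = 0), if_pos (by omega : 0 + 1 ≤ m + 1)]
      show G.Adj x (c 0)
      rw [hc0]
      exact h1
    · rcases Nat.lt_or_ge i (m + 1) with hlt | hge
      · simp only [if_neg (by omega : ¬ i = 0), if_pos (by omega : i ≤ m + 1),
          if_neg (by omega : ¬ i + 1 = 0), if_pos (by omega : i + 1 ≤ m + 1)]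
        have : i - 1 + 1 = i + 1 - 1 := by omega
        have hx := hadj (i - 1) (by omega)
        rwa [this] at hx
      · have hieq : i = m + 1 := by omega
        subst hieq
        simp only [if_neg (by omega : ¬ m + 1 = 0), if_pos (le_refl (m + 1)),
          if_neg (by omega : ¬ m + 1 + 1 = 0), if_neg (by omega : ¬ m + 1 + 1 ≤ m + 1)]
        have : m + 1 - 1 = m := by omega
        rw [this, hcm]
        exact h2
  · intro i hi hi'
    simp only [if_neg (by omega : ¬ i = 0), if_pos (by omega : i ≤ m + 1)]
    rcases Nat.eq_or_lt_of_le hi with h0 | h0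
    · have : i - 1 = 0 := by omega
      rw [this, hc0]
      exact ha1
    · exact hmem (i - 1) (by omega) (by omega)

/-- Existence of a minimal-length `FPath`. -/
lemma exists_min_fpath {A : Finset V} {x y : V} (hex : ∃ (n : ℕ) (c : ℕ → V), FPath G A x y c n) :
    ∃ n c, FPath G A x y c n ∧ ∀ m d, FPath G A x y d m → n ≤ m := by
  classical
  obtain ⟨n0, c0, h0⟩ := hex
  have hQ : ∃ n, ∃ c, FPath G A x y c n := ⟨n0, c0, h0⟩
  obtain ⟨c, hc⟩ := Nat.find_spec hQ
  exact ⟨Nat.find hQ, c, hc, fun m d hmd => Nat.find_min' hQ ⟨d, hmd⟩⟩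

section MinPath

variable {A : Finset V} {x y : V} {c : ℕ → V} {n : ℕ}

lemma fpath_two (hp : FPath G A x y c n) (hne : x ≠ y) (hnadj : ¬ G.Adj x y) : 2 ≤ n := by
  obtain ⟨h0, hn, hadj, _⟩ := hp
  rcases Nat.lt_or_ge n 2 with h | h
  · interval_cases n
    · exact absurd (h0.symm.trans hn) hne
    · exfalso
      have := hadj 0 (by omega)
      rw [h0] at this
      rw [hn] at this
      exact hnadj this
  · exact h

lemma min_fpath_inj (hp : FPath G A x y c n)
    (hmin : ∀ m d, FPath G A x y d m → n ≤ m)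
    (hxA : x ∉ A) (hyA : y ∉ A) (hne : x ≠ y) :
    ∀ i j, i < j → j ≤ n → c i ≠ c j := by
  obtain ⟨h0, hn, hadj, hmem⟩ := hp
  intro i j hij hjn heq
  rcases Nat.eq_or_lt_of_le hjn with hjeq | hjlt
  · subst hjeq
    rcases Nat.eq_zero_or_pos i with hi0 | hi0
    · subst hi0; rw [h0, hn] at heq; exact hne heq
    · have := hmem i hi0 hij
      rw [heq, hn] at this
      exact hyA this
  · rcases Nat.eq_zero_or_pos i with hi0 | hi0
    · subst hi0
      have := hmem j (by omega) hjlt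
      rw [← heq, h0] at this
      exact hxA this
    · -- surgery
      have hnew : FPath G A x y (fun t => if t ≤ i then c t else c (t + (j - i))) (n - (j - i)) := by
        refine ⟨by simp [h0], ?_, ?_, ?_⟩
        · simp only [if_neg (by omega : ¬ n - (j - i) ≤ i)]
          have : n - (j - i) + (j - i) = n := by omega
          rw [this, hn]
        · intro t ht
          rcases Nat.lt_or_ge t i with h | h
          · simp only [if_pos (by omega : t ≤ i), if_pos (by omega : t + 1 ≤ i)]
            exact hadj t (by omega)
          · rcases Nat.eq_or_lt_of_le h with h' | h'
            · simp only [if_pos (by omega : t ≤ i), if_neg (by omega : ¬ t + 1 ≤ i)]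
              have e1 : t + 1 + (j - i) = j + 1 := by omega
              rw [e1]
              have e2 : c t = c i := congrArg c (by omega)
              rw [e2, heq]
              exact hadj j (by omega)
            · simp only [if_neg (by omega : ¬ t ≤ i), if_neg (by omega : ¬ t + 1 ≤ i)]
              have e1 : t + 1 + (j - i) = t + (j - i) + 1 := by omega
              rw [e1]
              exact hadj (t + (j - i)) (by omega)
        · intro t ht0 htm
          rcases Nat.lt_or_ge i t with h | h
          · simp only [if_neg (by omega : ¬ t ≤ i)]
            exact hmem (t + (j - i)) (by omega) (by omega)
          · simp only [if_pos h]
            exact hmem t ht0 (by omega)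
      have := hmin _ _ hnew
      omega

lemma min_fpath_nochord (hp : FPath G A x y c n)
    (hmin : ∀ m d, FPath G A x y d m → n ≤ m)
    (hnadj : ¬ G.Adj x y) :
    ∀ i j, i + 1 < j → j ≤ n → ¬ G.Adj (c i) (c j) := by
  obtain ⟨h0, hn, hadj, hmem⟩ := hp
  intro i j hij hjn hcadj
  by_cases hcase : i = 0 ∧ j = n
  · rw [hcase.1, hcase.2, h0, hn] at hcadj
    exact hnadj hcadj
  · have hnew : FPath G A x y (fun t => if t ≤ i then c t else c (t + (j - i - 1))) (n - (j - i - 1)) := by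
      refine ⟨by simp [h0], ?_, ?_, ?_⟩
      · simp only [if_neg (by omega : ¬ n - (j - i - 1) ≤ i)]
        have : n - (j - i - 1) + (j - i - 1) = n := by omega
        rw [this, hn]
      · intro t ht
        rcases Nat.lt_or_ge t i with h | h
        · simp only [if_pos (by omega : t ≤ i), if_pos (by omega : t + 1 ≤ i)]
          exact hadj t (by omega)
        · rcases Nat.eq_or_lt_of_le h with h' | h'
          · simp only [if_pos (by omega : t ≤ i), if_neg (by omega : ¬ t + 1 ≤ i)]
            have e1 : t + 1 + (j - i - 1) = j := by omega
            have e2 : c t = c i := congrArg c (by omega)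
            rw [e1, e2]
            exact hcadj
          · simp only [if_neg (by omega : ¬ t ≤ i), if_neg (by omega : ¬ t + 1 ≤ i)]
            have e1 : t + 1 + (j - i - 1) = t + (j - i - 1) + 1 := by omega
            rw [e1]
            exact hadj (t + (j - i - 1)) (by omega)
      · intro t ht0 htm
        rcases Nat.lt_or_ge i t with h | h
        · simp only [if_neg (by omega : ¬ t ≤ i)]
          refine hmem (t + (j - i - 1)) (by omega) (by omega)
        · simp only [if_pos h]
          refine hmem t ht0 (by omega)
    have := hmin _ _ hnew
    omega

end MinPath

/-- From a combinatorial induced cycle of length at least 4, derive a contradiction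
with chordality. -/
lemma flag_no_cycle
    (hch : ∀ n, 4 ≤ n → ¬ ∃ f : Fin n ↪ V, ∀ a b, G.Adj (f a) (f b) ↔
      (SimpleGraph.fromRel (fun i j : Fin n => (i.val + 1) % n = j.val)).Adj a b)
    {N : ℕ} (hN : 4 ≤ N) (e : ℕ → V)
    (hinj : ∀ i j, i < j → j < N → e i ≠ e j)
    (hadj : ∀ i, i + 1 < N → G.Adj (e i) (e (i+1)))
    (hwrap : G.Adj (e (N-1)) (e 0))
    (hind : ∀ i j, i < j → j < N → G.Adj (e i) (e j) → j = i + 1 ∨ (i = 0 ∧ j = N - 1)) :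
    False := by
  apply hch N hN
  have hinj' : Function.Injective (fun i : Fin N => e i.val) := by
    intro i j hij
    by_contra hne
    rcases Nat.lt_trichotomy i.val j.val with h | h | h
    · exact hinj i.val j.val h j.isLt hij
    · exact hne (Fin.ext h)
    · exact hinj j.val i.val h i.isLt hij.symm
  refine ⟨⟨fun i => e i.val, hinj'⟩, ?_⟩
  intro a b
  rw [SimpleGraph.fromRel_adj]
  constructor
  · intro h
    have hne : a ≠ b := by
      rintro rfl
      exact G.irrefl h
    refine ⟨hne, ?_⟩
    rcases Nat.lt_trichotomy a.val b.val with hlt | heq | hgt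
    · rcases hind a.val b.val hlt b.isLt h with h1 | ⟨h1, h2⟩
      · left
        show (a.val + 1) % N = b.val
        rw [← h1]
        exact Nat.mod_eq_of_lt (by omega)
      · right
        show (b.val + 1) % N = a.val
        rw [h2, h1]
        have : N - 1 + 1 = N := by omega
        rw [this, Nat.mod_self]
    · exact absurd (Fin.ext heq) hne
    · rcases hind b.val a.val hgt a.isLt h.symm with h1 | ⟨h1, h2⟩
      · right
        show (b.val + 1) % N = a.val
        rw [← h1]
        exact Nat.mod_eq_of_lt (by omega)
      · left
        show (a.val + 1) % N = b.val
        rw [h2, h1]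
        have : N - 1 + 1 = N := by omega
        rw [this, Nat.mod_self]
  · rintro ⟨hne, hcons | hcons⟩
    · show G.Adj (e a.val) (e b.val)
      rcases Nat.lt_or_ge (a.val + 1) N with h1 | h1
      · have hb : b.val = a.val + 1 := by
          rw [← hcons]
          exact Nat.mod_eq_of_lt h1
        rw [hb]
        exact hadj a.val (by omega)
      · have ha : a.val = N - 1 := by have := a.isLt; omega
        have hb : b.val = 0 := by
          rw [← hcons]
          have h2 : a.val + 1 = N := by have := a.isLt; omega
          rw [h2, Nat.mod_self]
        rw [ha, hb]
        exact hwrap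
    · show G.Adj (e a.val) (e b.val)
      rcases Nat.lt_or_ge (b.val + 1) N with h1 | h1
      · have hb : a.val = b.val + 1 := by
          rw [← hcons]
          exact Nat.mod_eq_of_lt h1
        rw [hb]
        exact (hadj b.val (by omega)).symm
      · have ha : b.val = N - 1 := by have := b.isLt; omega
        have hb : a.val = 0 := by
          rw [← hcons]
          have h2 : b.val + 1 = N := by have := b.isLt; omega
          rw [h2, Nat.mod_self]
        rw [ha, hb]
        exact hwrap.symm

end GraphPath

section Dirac

variable {G : SimpleGraph V}

/-- `x` is a simplicial vertex of the subgraph induced on `S`. -/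
def SimpIn (G : SimpleGraph V) (S : Finset V) (x : V) : Prop :=
  x ∈ S ∧ ∀ c1 ∈ S, ∀ c2 ∈ S, G.Adj x c1 → G.Adj x c2 → c1 ≠ c2 → G.Adj c1 c2

lemma cross_comp_nadj {S T : Finset V} {a b : V} (hb : b ∈ S \ T)
    (hsep : ¬ reachIn G (S \ T) a b) :
    ∀ p ∈ gcomp G (S \ T) a, ∀ q ∈ gcomp G (S \ T) b, ¬ G.Adj p q := by
  intro p hp q hq hadj
  have h1 : reachIn G (S \ T) a q :=
    (mem_gcomp.1 hp).2.tail ⟨(mem_gcomp.1 hq).1, hadj⟩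
  have h2 : reachIn G (S \ T) q b := ((mem_gcomp.1 hq).2).symm hb
  exact hsep (h1.trans h2)

lemma cross_comp_disj {S T : Finset V} {a b : V} (hb : b ∈ S \ T)
    (hsep : ¬ reachIn G (S \ T) a b) :
    ∀ p ∈ gcomp G (S \ T) a, p ∉ gcomp G (S \ T) b := by
  intro p hp hpB
  have h2 : reachIn G (S \ T) p b := ((mem_gcomp.1 hpB).2).symm hb
  exact hsep ((mem_gcomp.1 hp).2.trans h2)

/-- If `t ∈ T` has no neighbour in the component of `a`, then `T.erase t` still separates. -/
lemma sep_min_nbr {S T : Finset V} {a b t : V} (ha : a ∈ S \ T) (ht : t ∈ T)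
    (hsep : ¬ reachIn G (S \ T) a b)
    (hreach : reachIn G (S \ T.erase t) a b) :
    ∃ p ∈ gcomp G (S \ T) a, G.Adj t p := by
  by_contra hno
  push_neg at hno
  have claim : ∀ z, reachIn G (S \ T.erase t) a z → z ∈ gcomp G (S \ T) a := by
    intro z hz
    induction hz with
    | refl => exact mem_gcomp_self ha
    | @tail z' y h1 h2 ih =>
      rcases eq_or_ne y t with rfl | hyt
      · exact absurd (h2.2.symm) (hno z' ih)
      · refine gcomp_closed ih ?_ h2.2
        have hy := Finset.mem_sdiff.1 h2.1
        exact Finset.mem_sdiff.2 ⟨hy.1, fun hyT => hy.2 (Finset.mem_erase.2 ⟨hyt, hyT⟩)⟩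
  exact hsep (mem_gcomp.1 (claim b hreach)).2

/-- A minimal separator in a chordal graph is a clique. -/
lemma sep_clique
    (hch : ∀ n, 4 ≤ n → ¬ ∃ f : Fin n ↪ V, ∀ a b, G.Adj (f a) (f b) ↔
      (SimpleGraph.fromRel (fun i j : Fin n => (i.val + 1) % n = j.val)).Adj a b)
    {S T : Finset V} {a b : V} (ha : a ∈ S \ T) (hb : b ∈ S \ T)
    (hnadj : ¬ G.Adj a b)
    (hsep : ¬ reachIn G (S \ T) a b)
    (hnbrA : ∀ t ∈ T, ∃ p ∈ gcomp G (S \ T) a, G.Adj t p)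
    (hnbrB : ∀ t ∈ T, ∃ p ∈ gcomp G (S \ T) b, G.Adj t p) :
    ∀ x ∈ T, ∀ y ∈ T, x ≠ y → G.Adj x y := by
  intro x hx y hy hxy
  by_contra hxynadj
  set A := gcomp G (S \ T) a with hA
  set B := gcomp G (S \ T) b with hB
  obtain ⟨p1, hp1, hp1adj⟩ := hnbrA x hx
  obtain ⟨p2, hp2, hp2adj⟩ := hnbrA y hy
  obtain ⟨q1, hq1, hq1adj⟩ := hnbrB x hx
  obtain ⟨q2, hq2, hq2adj⟩ := hnbrB y hy
  -- x ∉ A etc.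
  have hxA : x ∉ A := fun h => (Finset.mem_sdiff.1 (gcomp_subset _ _ h)).2 hx
  have hyA : y ∉ A := fun h => (Finset.mem_sdiff.1 (gcomp_subset _ _ h)).2 hy
  have hxB : x ∉ B := fun h => (Finset.mem_sdiff.1 (gcomp_subset _ _ h)).2 hx
  have hyB : y ∉ B := fun h => (Finset.mem_sdiff.1 (gcomp_subset _ _ h)).2 hy
  -- path from x to y through A
  have hrA : reachIn G A p1 p2 := by
    have h1 : reachIn G A a p1 := reach_gcomp ha (mem_gcomp.1 hp1).2
    have h2 : reachIn G A a p2 := reach_gcomp ha (mem_gcomp.1 hp2).2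
    exact (h1.symm (mem_gcomp_self ha)).trans h2
  have hrB : reachIn G B q2 q1 := by
    have h1 : reachIn G B b q1 := reach_gcomp hb (mem_gcomp.1 hq1).2
    have h2 : reachIn G B b q2 := reach_gcomp hb (mem_gcomp.1 hq2).2
    exact (h2.symm (mem_gcomp_self hb)).trans h1
  obtain ⟨n, c, hc, hcmin⟩ := exists_min_fpath (fpath_glue hp1adj (hp2adj.symm) hp1 hrA)
  obtain ⟨m, d, hd, hdmin⟩ := exists_min_fpath (fpath_glue hq2adj (hq1adj.symm) hq2 hrB)
  have hn2 : 2 ≤ n := fpath_two hc hxy hxynadj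
  have hm2 : 2 ≤ m := fpath_two hd (Ne.symm hxy) (fun h => hxynadj h.symm)
  have hcinj := min_fpath_inj hc hcmin hxA hyA hxy
  have hdinj := min_fpath_inj hd hdmin hyB hxB (Ne.symm hxy)
  have hcch := min_fpath_nochord hc hcmin hxynadj
  have hdch := min_fpath_nochord hd hdmin (fun h => hxynadj h.symm)
  obtain ⟨hc0, hcn, hcadj, hcmem⟩ := hc
  obtain ⟨hd0, hdm, hdadj, hdmem⟩ := hd
  -- the cycle
  set N := n + m with hN
  have hN4 : 4 ≤ N := by omega
  set e : ℕ → V := fun i => if i ≤ n then c i else d (i - n) with he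
  have heC : ∀ i, i ≤ n → e i = c i := fun i hi => if_pos hi
  have heD : ∀ i, n ≤ i → i ≤ N → e i = d (i - n) := by
    intro i hi hi'
    rcases Nat.eq_or_lt_of_le hi with h | h
    · rw [he]
      simp only [← h, if_pos (le_refl n)]
      rw [Nat.sub_self, hd0, hcn]
    · rw [he]
      simp only [if_neg (by omega : ¬ i ≤ n)]
  have he0 : e 0 = x := by rw [heC 0 (by omega), hc0]
  have hcross : ∀ p ∈ A, ∀ q ∈ B, ¬ G.Adj p q := cross_comp_nadj hb hsep
  have hdisj : ∀ p ∈ A, p ∉ B := cross_comp_disj hb hsep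
  -- interiors
  have hcint : ∀ i, 0 < i → i < n → c i ∈ A := hcmem
  have hdint : ∀ i, 0 < i → i < m → d i ∈ B := hdmem
  refine flag_no_cycle hch hN4 e ?_ ?_ ?_ ?_
  · -- injectivity
    intro i j hij hjN heq
    rcases le_or_gt j n with hjn | hjn
    · rw [heC i (by omega), heC j hjn] at heq
      exact hcinj i j hij hjn heq
    · rcases le_or_gt i n with hin | hin
      · rw [heC i hin, heD j (by omega) (by omega)] at heq
        have hj1 : 0 < j - n := by omega
        have hj2 : j - n < m := by omega
        have hdj : d (j - n) ∈ B := hdint _ hj1 hj2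
        rcases Nat.eq_or_lt_of_le (Nat.zero_le i) with h0 | h0
        · rw [← h0, hc0] at heq
          exact hxB (heq ▸ hdj)
        · rcases Nat.eq_or_lt_of_le hin with h1 | h1
          · rw [h1, hcn] at heq
            exact hyB (heq ▸ hdj)
          · exact hdisj (c i) (hcint i h0 h1) (heq ▸ hdj)
      · rw [heD i (by omega) (by omega), heD j (by omega) (by omega)] at heq
        exact hdinj (i - n) (j - n) (by omega) (by omega) heq
  · -- consecutive adjacency
    intro i hi
    rcases Nat.lt_or_ge i n with hin | hin
    · rw [heC i (by omega), heC (i+1) (by omega)]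
      exact hcadj i hin
    · rw [heD i hin (by omega), heD (i+1) (by omega) (by omega)]
      have h1 : i + 1 - n = (i - n) + 1 := by omega
      rw [h1]
      exact hdadj (i - n) (by omega)
  · -- wrap
    rw [heD (N - 1) (by omega) (by omega), he0]
    have h1 : N - 1 - n = m - 1 := by omega
    rw [h1]
    have h2 := hdadj (m - 1) (by omega)
    have h3 : m - 1 + 1 = m := by omega
    rw [h3, hdm] at h2
    exact h2
  · -- induced
    intro i j hij hjN hadj
    rcases le_or_gt j n with hjn | hjn
    · rw [heC i (by omega), heC j hjn] at hadj
      rcases Nat.lt_or_ge (i + 1) j with h1 | h1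
      · exact absurd hadj (hcch i j h1 hjn)
      · left; omega
    · rcases le_or_gt i n with hin | hin
      · rcases Nat.eq_or_lt_of_le hin with hieq | hilt
        · -- i = n : e i = y = d 0
          rw [heD i (by omega) (by omega), heD j (by omega) (by omega)] at hadj
          rcases Nat.lt_or_ge (i - n + 1) (j - n) with h1 | h1
          · exact absurd hadj (hdch (i - n) (j - n) h1 (by omega))
          · left; omega
        · -- i < n < j
          rw [heC i (by omega), heD j (by omega) (by omega)] at hadj
          have hdjB : d (j - n) ∈ B := hdint _ (by omega) (by omega)
          rcases Nat.eq_or_lt_of_le (Nat.zero_le i) with h0 | h0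
          · -- i = 0 : x adjacent to d (j - n)
            rw [← h0, hc0] at hadj
            have hxd : G.Adj (d (j - n)) (d m) := by
              rw [hdm]; exact hadj.symm
            rcases Nat.lt_or_ge (j - n + 1) m with h1 | h1
            · exact absurd hxd (hdch (j - n) m h1 (le_refl m))
            · right
              constructor
              · omega
              · omega
          · -- interior of c adjacent to interior of d : impossible
            exact absurd hadj (hcross (c i) (hcint i h0 hilt) (d (j - n)) hdjB)
      · rw [heD i (by omega) (by omega), heD j (by omega) (by omega)] at hadj
        rcases Nat.lt_or_ge (i - n + 1) (j - n) with h1 | h1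
        · exact absurd hadj (hdch (i - n) (j - n) h1 (by omega))
        · left; omega

/-- Dirac: a chordal graph (restricted to `S`) is complete or has two nonadjacent
simplicial vertices. -/
lemma dirac
    (hch : ∀ n, 4 ≤ n → ¬ ∃ f : Fin n ↪ V, ∀ a b, G.Adj (f a) (f b) ↔
      (SimpleGraph.fromRel (fun i j : Fin n => (i.val + 1) % n = j.val)).Adj a b)
    (S : Finset V) : S.Nonempty →
      (∀ x ∈ S, ∀ y ∈ S, x ≠ y → G.Adj x y) ∨
      (∃ x ∈ S, ∃ y ∈ S, x ≠ y ∧ ¬ G.Adj x y ∧ SimpIn G S x ∧ SimpIn G S y) := by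
  induction S using Finset.strongInduction with
  | _ S IH =>
    intro hSne
    by_cases hcomp : ∀ x ∈ S, ∀ y ∈ S, x ≠ y → G.Adj x y
    · left; exact hcomp
    right
    push_neg at hcomp
    obtain ⟨a, ha, b, hb, hab, hnadj⟩ := hcomp
    set T0 := (S.erase a).erase b with hT0def
    have hmemT0 : ∀ z, z ∈ S \ T0 → z = a ∨ z = b := by
      intro z hz
      rw [Finset.mem_sdiff] at hz
      by_contra hcon
      push_neg at hcon
      exact hz.2 (by rw [hT0def, Finset.mem_erase, Finset.mem_erase]
                     exact ⟨hcon.2, hcon.1, hz.1⟩)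
    have hT0sep : ¬ reachIn G (S \ T0) a b := by
      intro hr
      have claim : ∀ z, reachIn G (S \ T0) a z → z = a := by
        intro z hz
        induction hz with
        | refl => rfl
        | @tail z' y h1 h2 ih =>
          rcases hmemT0 y h2.1 with rfl | rfl
          · exact rfl
          · rw [ih] at h2
            exact absurd h2.2 hnadj
      exact hab (claim b hr).symm
    have haT0 : a ∉ T0 := by
      rw [hT0def]
      intro h
      exact absurd rfl (Finset.ne_of_mem_erase (Finset.mem_of_mem_erase h))
    have hbT0 : b ∉ T0 := by
      rw [hT0def]
      intro h
      exact absurd rfl (Finset.ne_of_mem_erase h)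
    let F := T0.powerset.filter (fun T => ¬ reachIn G (S \ T) a b)
    have hFne : F.Nonempty := ⟨T0, Finset.mem_filter.2 ⟨Finset.mem_powerset_self T0, hT0sep⟩⟩
    obtain ⟨T, hTF, hTmin⟩ := Finset.exists_min_image F Finset.card hFne
    have hTsub : T ⊆ T0 := Finset.mem_powerset.1 (Finset.mem_filter.1 hTF).1
    have hsep : ¬ reachIn G (S \ T) a b := (Finset.mem_filter.1 hTF).2
    have hmin : ∀ T', T' ⊆ T0 → ¬ reachIn G (S \ T') a b → T.card ≤ T'.card := by
      intro T' h1 h2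
      exact hTmin T' (Finset.mem_filter.2 ⟨Finset.mem_powerset.2 h1, h2⟩)
    have hTS : T ⊆ S := hTsub.trans ((Finset.erase_subset _ _).trans (Finset.erase_subset _ _))
    have haT : a ∉ T := fun h => haT0 (hTsub h)
    have hbT : b ∉ T := fun h => hbT0 (hTsub h)
    have haST : a ∈ S \ T := Finset.mem_sdiff.2 ⟨ha, haT⟩
    have hbST : b ∈ S \ T := Finset.mem_sdiff.2 ⟨hb, hbT⟩
    have hsepb : ¬ reachIn G (S \ T) b a := fun h => hsep (h.symm hbST)
    -- neighbours of every separator vertex in both components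
    have hnbrA : ∀ t ∈ T, ∃ p ∈ gcomp G (S \ T) a, G.Adj t p := by
      intro t ht
      by_cases h2 : reachIn G (S \ T.erase t) a b
      · exact sep_min_nbr haST ht hsep h2
      · exfalso
        have := hmin (T.erase t) ((Finset.erase_subset _ _).trans hTsub) h2
        have hcard := Finset.card_erase_of_mem ht
        have hpos : 0 < T.card := Finset.card_pos.2 ⟨t, ht⟩
        omega
    have hnbrB : ∀ t ∈ T, ∃ p ∈ gcomp G (S \ T) b, G.Adj t p := by
      intro t ht
      by_cases h2 : reachIn G (S \ T.erase t) b a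
      · exact sep_min_nbr hbST ht hsepb h2
      · exfalso
        have h2' : ¬ reachIn G (S \ T.erase t) a b := by
          intro h3
          have haTe : a ∈ S \ T.erase t :=
            Finset.mem_sdiff.2 ⟨ha, fun hc => haT (Finset.mem_of_mem_erase hc)⟩
          exact h2 (h3.symm haTe)
        have := hmin (T.erase t) ((Finset.erase_subset _ _).trans hTsub) h2'
        have hcard := Finset.card_erase_of_mem ht
        have hpos : 0 < T.card := Finset.card_pos.2 ⟨t, ht⟩
        omega
    have hTcl : ∀ x ∈ T, ∀ y ∈ T, x ≠ y → G.Adj x y :=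
      sep_clique hch haST hbST hnadj hsep hnbrA hnbrB
    -- a simplicial vertex inside each component
    have hstep : ∀ (p q : V), p ∈ S \ T → q ∈ S \ T → ¬ reachIn G (S \ T) p q →
        ∃ w ∈ gcomp G (S \ T) p, SimpIn G S w := by
      intro p q hp hq hsepq
      have hpA : p ∈ gcomp G (S \ T) p := mem_gcomp_self hp
      have hAS : gcomp G (S \ T) p ⊆ S := (gcomp_subset _ _).trans (Finset.sdiff_subset)
      have hS1S : gcomp G (S \ T) p ∪ T ⊆ S := Finset.union_subset hAS hTS
      have hqS1 : q ∉ gcomp G (S \ T) p ∪ T := by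
        rw [Finset.mem_union]
        rintro (h | h)
        · exact hsepq (mem_gcomp.1 h).2
        · exact (Finset.mem_sdiff.1 hq).2 h
      have hproper : gcomp G (S \ T) p ∪ T ⊂ S :=
        Finset.ssubset_iff_of_subset hS1S |>.2 ⟨q, (Finset.mem_sdiff.1 hq).1, hqS1⟩
      have hnbr_closed : ∀ z ∈ gcomp G (S \ T) p, ∀ w ∈ S, G.Adj z w →
          w ∈ gcomp G (S \ T) p ∪ T := by
        intro z hz w hw hadj
        by_cases hwT : w ∈ T
        · exact Finset.mem_union_right _ hwT
        · exact Finset.mem_union_left _ (gcomp_closed hz (Finset.mem_sdiff.2 ⟨hw, hwT⟩) hadj)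
      rcases IH _ hproper ⟨p, Finset.mem_union_left _ hpA⟩ with hcompl | ⟨x, hx1, y, hy1, hxyne, hxynadj, hsx, hsy⟩
      · refine ⟨p, hpA, (Finset.mem_sdiff.1 hp).1, ?_⟩
        intro c1 hc1 c2 hc2 h1 h2 hne
        exact hcompl c1 (hnbr_closed p hpA c1 hc1 h1) c2 (hnbr_closed p hpA c2 hc2 h2) hne
      · have hone : x ∈ gcomp G (S \ T) p ∨ y ∈ gcomp G (S \ T) p := by
          by_contra hcon
          push_neg at hcon
          have hx2 : x ∈ T := (Finset.mem_union.1 hx1).resolve_left hcon.1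
          have hy2 : y ∈ T := (Finset.mem_union.1 hy1).resolve_left hcon.2
          exact hxynadj (hTcl x hx2 y hy2 hxyne)
        have key : ∀ w, w ∈ gcomp G (S \ T) p → SimpIn G (gcomp G (S \ T) p ∪ T) w →
            ∃ w' ∈ gcomp G (S \ T) p, SimpIn G S w' := by
          intro w hw hsw
          refine ⟨w, hw, hAS hw, ?_⟩
          intro c1 hc1 c2 hc2 h1 h2 hne
          exact hsw.2 c1 (hnbr_closed w hw c1 hc1 h1) c2 (hnbr_closed w hw c2 hc2 h2) h1 h2 hne
        rcases hone with h | h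
        · exact key x h hsx
        · exact key y h hsy
    obtain ⟨wA, hwA, hwAS⟩ := hstep a b haST hbST hsep
    obtain ⟨wB, hwB, hwBS⟩ := hstep b a hbST haST hsepb
    refine ⟨wA, hwAS.1, wB, hwBS.1, ?_, ?_, hwAS, hwBS⟩
    · intro h
      exact cross_comp_disj hbST hsep wA hwA (h ▸ hwB)
    · exact cross_comp_nadj hbST hsep wA hwA wB hwB

end Dirac

section Assembly

variable {G : SimpleGraph V}

lemma reachable_reachIn {x y : V} (h : G.Reachable x y) : reachIn G Finset.univ x y := by
  obtain ⟨w⟩ := h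
  induction w with
  | nil => exact Relation.ReflTransGen.refl
  | cons h p ih => exact Relation.ReflTransGen.head ⟨Finset.mem_univ _, h⟩ ih

lemma conn_erase {S : Finset V} {v u : V} (hd : Dom G S v u)
    (hconn : ∀ x ∈ S, ∀ y ∈ S, reachIn G S x y) :
    ∀ x ∈ S.erase v, ∀ y ∈ S.erase v, reachIn G (S.erase v) x y := by
  intro x hx y hy
  have hxS := Finset.mem_of_mem_erase hx
  have hxv := Finset.ne_of_mem_erase hx
  have key : ∀ z, reachIn G S x z → reachIn G (S.erase v) x (if z = v then u else z) := by
    intro z hz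
    induction hz with
    | refl =>
      simp only [if_neg hxv]
      exact Relation.ReflTransGen.refl
    | @tail z' w h1 h2 ih =>
      by_cases hwv : w = v
      · rw [if_pos hwv]
        by_cases hz'v : z' = v
        · rw [hz'v, hwv] at h2
          exact absurd h2.2 (G.irrefl)
        · rw [if_neg hz'v] at ih
          have hz'S : z' ∈ S := reachIn.mem_of h1 hxS
          have hadjvz' : G.Adj v z' := by
            rw [hwv] at h2
            exact h2.2.symm
          rcases hd.hdom z' hz'S hadjvz' with rfl | hadj
          · exact ih
          · exact ih.tail ⟨Finset.mem_erase.2 ⟨hd.huv, hd.huS⟩, hadj.symm⟩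
      · rw [if_neg hwv]
        by_cases hz'v : z' = v
        · rw [if_pos hz'v] at ih
          have hadjvw : G.Adj v w := by
            rw [hz'v] at h2
            exact h2.2
          rcases hd.hdom w h2.1 hadjvw with rfl | hadj
          · exact ih
          · exact ih.tail ⟨Finset.mem_erase.2 ⟨hwv, h2.1⟩, hadj⟩
        · rw [if_neg hz'v] at ih
          exact ih.tail ⟨Finset.mem_erase.2 ⟨hwv, h2.1⟩, h2.2⟩
  have hfin := key y (hconn x hxS y (Finset.mem_of_mem_erase hy))
  rw [if_neg (Finset.ne_of_mem_erase hy)] at hfin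
  exact hfin

lemma exists_dom
    (hch : ∀ n, 4 ≤ n → ¬ ∃ f : Fin n ↪ V, ∀ a b, G.Adj (f a) (f b) ↔
      (SimpleGraph.fromRel (fun i j : Fin n => (i.val + 1) % n = j.val)).Adj a b)
    (S : Finset V) (hS2 : 2 ≤ S.card)
    (hconn : ∀ x ∈ S, ∀ y ∈ S, reachIn G S x y) :
    ∃ v u, Dom G S v u := by
  have hSne : S.Nonempty := Finset.card_pos.1 (by omega)
  have hnbr : ∀ v ∈ S, ∃ u ∈ S, G.Adj v u := by
    intro v hv
    obtain ⟨w, hw, hwv⟩ := Finset.exists_mem_ne (s := S) (by omega) v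
    have hr := hconn v hv w hw
    rcases Relation.ReflTransGen.cases_head hr with heq | ⟨z, hz1, hz2⟩
    · exact absurd heq.symm hwv
    · exact ⟨z, hz1.1, hz1.2⟩
  rcases dirac hch S hSne with hcompl | ⟨x, hx, y, hy, hxy, hxynadj, hsx, hsy⟩
  · obtain ⟨v, hv⟩ := hSne
    obtain ⟨u, hu, hadj⟩ := hnbr v hv
    refine ⟨v, u, hv, hu, hadj.symm, ?_⟩
    intro w hw hadjvw
    by_cases hwu : w = u
    · exact Or.inl hwu
    · exact Or.inr (hcompl u hu w hw (fun h => hwu h.symm))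
  · obtain ⟨u, hu, hadj⟩ := hnbr x hx
    refine ⟨x, u, hx, hu, hadj.symm, ?_⟩
    intro w hw hadjxw
    by_cases hwu : w = u
    · exact Or.inl hwu
    · exact Or.inr (hsx.2 u hu w hw hadj hadjxw (fun h => hwu h.symm))

lemma exists_contraction (R : Type) [CommRing R]
    (hch : ∀ n, 4 ≤ n → ¬ ∃ f : Fin n ↪ V, ∀ a b, G.Adj (f a) (f b) ↔
      (SimpleGraph.fromRel (fun i j : Fin n => (i.val + 1) % n = j.val)).Adj a b)
    (S : Finset V) :
    S.Nonempty → (∀ x ∈ S, ∀ y ∈ S, reachIn G S x y) → Nonempty (Contraction G R S) := by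
  induction S using Finset.strongInduction with
  | _ S IH =>
    intro hne hconn
    rcases Nat.lt_or_ge S.card 2 with h2 | h2
    · have h1 : S.card = 1 := by
        have := Finset.card_pos.2 hne
        omega
      obtain ⟨bb, hbb⟩ := Finset.card_eq_one.1 h1
      subst hbb
      exact ⟨contractionBase bb⟩
    · obtain ⟨v, u, hd⟩ := exists_dom hch S h2 hconn
      have hvS := hd.hvS
      have hsub : S.erase v ⊂ S := Finset.erase_ssubset hvS
      have hne' : (S.erase v).Nonempty := by
        have hce := Finset.card_erase_of_mem hvS
        refine Finset.card_pos.1 ?_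
        omega
      obtain ⟨C⟩ := IH _ hsub hne' (conn_erase hd hconn)
      exact ⟨contractionStep hd C⟩

end Assembly

/-- the flag complex of a finite connected chordal graph is acyclic over
any commutative coefficient ring. -/
theorem stmt7 (G : SimpleGraph V) (hconn : G.Connected)
    (hch : ∀ n, 4 ≤ n → ¬ ∃ f : Fin n ↪ V, ∀ a b, G.Adj (f a) (f b) ↔
      (SimpleGraph.fromRel (fun i j : Fin n => (i.val + 1) % n = j.val)).Adj a b) :
    ∀ (R : Type) (_ : CommRing R), FlagAcyclic G R := by
  intro R instR
  have hconn' : ∀ x ∈ (Finset.univ : Finset V), ∀ y ∈ (Finset.univ : Finset V),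
      reachIn G Finset.univ x y := by
    intro x _ y _
    exact reachable_reachIn (hconn.preconnected x y)
  have hV : Nonempty V := hconn.nonempty
  obtain ⟨C⟩ := exists_contraction R hch Finset.univ Finset.univ_nonempty hconn'
  have hins : ∀ (k : ℕ) (c : FlagChain G R k), InSet c Finset.univ :=
    fun k c t _ => Finset.subset_univ _
  refine ⟨?_, ?_, ?_⟩
  · intro r
    refine ⟨r • C.c0, ?_⟩
    rw [map_smul, C.c0_aug, smul_eq_mul, mul_one]
  · ext c
    constructor
    · intro hcker
      rw [LinearMap.mem_ker] at hcker
      rw [LinearMap.mem_range]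
      refine ⟨C.hh 0 c, ?_⟩
      rw [C.deg0 c (hins 0 c), hcker, zero_smul, sub_zero]
    · intro hcr
      rw [LinearMap.mem_range] at hcr
      obtain ⟨d, rfl⟩ := hcr
      rw [LinearMap.mem_ker]
      exact aug_bdry d
  · intro k
    ext c
    constructor
    · intro hcker
      rw [LinearMap.mem_ker] at hcker
      rw [LinearMap.mem_range]
      refine ⟨C.hh (k+1) c, ?_⟩
      have hkey := C.degk k c (hins (k+1) c)
      rw [hcker, map_zero, add_zero] at hkey
      exact hkey
    · intro hcr
      rw [LinearMap.mem_range] at hcr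
      obtain ⟨d, rfl⟩ := hcr
      rw [LinearMap.mem_ker]
      exact bdry_bdry k d
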